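/- There exists a bound T, depending only on the burstiness b, such that in every execution of algorithm Quadruple-Round against a 1-activating adversary of type (3/8, b), every injected packet is heard within T rounds of its injection; that is, Quadruple-Round has bounded packet latency against the 1-activating adversary of injection rate 3/8. -/

import Mathlib

/-- Remove one packet from the queue of station `i` (stations of a segment are indexed
`0, 1, 2, 3`; `q i` is the number of packets pending at station `i`). -/
def deqQR (q : ℕ → ℕ) (i : ℕ) : ℕ → ℕ := fun j => if j = i then q j - 1 else q j

/-- The number of active stations of a segment. -/
def activeCountQR (q : ℕ → ℕ) : ℕ :=
  (if q 0 = 0 then 0 else 1) + (if q 1 = 0 then 0 else 1) +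
    (if q 2 = 0 then 0 else 1) + (if q 3 = 0 then 0 else 1)

/-- One iteration of a phase of algorithm Quadruple-Round, for a segment whose stations
currently hold the packet counts `q` (with at least one active station).  It returns the
list of the rounds of the iteration — each entry `some i` meaning that a packet of station
`i` is heard in that round and `none` meaning a void round (collision or silence) — and
the resulting packet counts.  In the first round all active stations of the segment
transmit: if only one station is active its packet is heard and the iteration ends; after
a collision the stations of the left pair (0 and 1) transmit in the second round: if both
are active this is a collision and stations 0 and 1 then transmit singly in the third and
fourth rounds; if exactly one is active its packet is heard, ending the iteration; if the
second round is silent, the right-pair stations 2 and 3 transmit singly in the third and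
fourth rounds. -/
def iterQR (q : ℕ → ℕ) : List (Option ℕ) × (ℕ → ℕ) :=
  if activeCountQR q = 1 then
    let i := if q 0 ≠ 0 then 0 else if q 1 ≠ 0 then 1 else if q 2 ≠ 0 then 2 else 3
    ([some i], deqQR q i)
  else if q 0 ≠ 0 ∧ q 1 ≠ 0 then ([none, none, some 0, some 1], deqQR (deqQR q 0) 1)
  else if q 0 ≠ 0 then ([none, some 0], deqQR q 0)
  else if q 1 ≠ 0 then ([none, some 1], deqQR q 1)
  else ([none, none, some 2, some 3], deqQR (deqQR q 2) 3)

/-- The trace of a phase (fuelled version): iterations repeat until all stations of the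
segment are passive, and a final silent round ends the phase. -/
def phaseTraceAux : ℕ → (ℕ → ℕ) → List (Option ℕ)
  | 0, _ => []
  | fuel + 1, q =>
    if q 0 = 0 ∧ q 1 = 0 ∧ q 2 = 0 ∧ q 3 = 0 then [none]
    else (iterQR q).1 ++ phaseTraceAux fuel (iterQR q).2

/-- The round-by-round trace of the phase processing a segment whose four stations hold
the packet counts `q`. -/
def phaseTrace (q : ℕ → ℕ) : List (Option ℕ) :=
  phaseTraceAux (q 0 + q 1 + q 2 + q 3 + 1) q

/-- The number of rounds taken by the phase processing a segment with packet counts `q`. -/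
def phaseLen (q : ℕ → ℕ) : ℕ := (phaseTrace q).length

/-- Admissibility of a 1-activating injection pattern `a` (in round `t`, a fresh passive
station labelled `t` is activated with `a t` packets, when `a t > 0`) for the leaky-bucket
adversary of type `(ρ, b)`. -/
def Admissible (ρ : ℝ) (b : ℕ) (a : ℕ → ℕ) : Prop :=
  ∀ s n : ℕ, ((∑ t ∈ Finset.Ico s (s + n), a t : ℕ) : ℝ) ≤ ρ * n + b

/-- The packet counts of the four stations of segment `j` (segment `j` consists of the
rounds `4j, …, 4j + 3`; against a 1-activating adversary each station holds exactly the
packets injected at its activation). -/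
def segQ (a : ℕ → ℕ) (j : ℕ) : ℕ → ℕ := fun i => a (4 * j + i)

/-- The first round of the phase processing segment `j`: phases are executed one after the
other, and the phase of a segment starts only after at least four rounds have passed since
the first round of the segment. -/
def phaseStart (a : ℕ → ℕ) : ℕ → ℕ
  | 0 => 4
  | j + 1 => max (phaseStart a j + phaseLen (segQ a j)) (4 * (j + 1) + 4)

/-- The number of packets of station `v` heard (in the phase of its segment `v / 4`)
strictly before round `t`. -/
def heardBefore (a : ℕ → ℕ) (v t : ℕ) : ℕ :=
  ((List.range (phaseTrace (segQ a (v / 4))).length).filter fun off =>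
      decide (phaseStart a (v / 4) + off < t) &&
      decide ((phaseTrace (segQ a (v / 4))).getD off none = some (v % 4))).length

/-- The number of packets pending at station `v` at the beginning of round `t` in the
execution of Quadruple-Round against the 1-activating injection pattern `a`. -/
def pendingQR (a : ℕ → ℕ) (v t : ℕ) : ℕ := a v - heardBefore a v t

section AuxQR

/-- Spec of one iteration: counts of heard packets, length bound, strict decrease. -/
lemma iterQR_spec (q : ℕ → ℕ) (h : ¬(q 0 = 0 ∧ q 1 = 0 ∧ q 2 = 0 ∧ q 3 = 0)) :
    (∀ i, i < 4 → List.count (some i) (iterQR q).1 + (iterQR q).2 i = q i) ∧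
    (iterQR q).1.length + 2 * ((iterQR q).2 0 + (iterQR q).2 1 + (iterQR q).2 2 + (iterQR q).2 3)
        ≤ 2 * (q 0 + q 1 + q 2 + q 3) ∧
    (iterQR q).2 0 + (iterQR q).2 1 + (iterQR q).2 2 + (iterQR q).2 3
        < q 0 + q 1 + q 2 + q 3 := by
  by_cases h1 : activeCountQR q = 1
  · by_cases h0 : q 0 = 0
    · by_cases hq1 : q 1 = 0
      · by_cases hq2 : q 2 = 0
        · have hq3 : q 3 ≠ 0 := fun h3 => h ⟨h0, hq1, hq2, h3⟩
          refine ⟨fun i hi => ?_, ?_, ?_⟩ <;>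
            simp only [iterQR, if_pos h1, h0, hq1, hq2, ne_eq, not_true_eq_false,
              if_false, deqQR] <;>
            first
            | (interval_cases i <;> simp [List.count_cons] <;> omega)
            | (simp; omega)
        · refine ⟨fun i hi => ?_, ?_, ?_⟩ <;>
            simp only [iterQR, if_pos h1, h0, hq1, ne_eq, not_true_eq_false, hq2,
              not_false_eq_true, if_true, if_false, deqQR] <;>
            first
            | (interval_cases i <;> simp [List.count_cons] <;> omega)
            | (simp; omega)
      · refine ⟨fun i hi => ?_, ?_, ?_⟩ <;>
          simp only [iterQR, if_pos h1, h0, ne_eq, not_true_eq_false, hq1,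
            not_false_eq_true, if_true, if_false, deqQR] <;>
          first
          | (interval_cases i <;> simp [List.count_cons] <;> omega)
          | (simp; omega)
    · refine ⟨fun i hi => ?_, ?_, ?_⟩ <;>
        simp only [iterQR, if_pos h1, ne_eq, h0, not_false_eq_true, if_true, deqQR] <;>
        first
        | (interval_cases i <;> simp [List.count_cons] <;> omega)
        | (simp; omega)
  · by_cases h01 : q 0 ≠ 0 ∧ q 1 ≠ 0
    · refine ⟨fun i hi => ?_, ?_, ?_⟩ <;>
        simp only [iterQR, if_neg h1, if_pos h01, deqQR] <;>
        first
        | (interval_cases i <;> simp [List.count_cons] <;> omega)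
        | (simp; omega)
    · by_cases h0 : q 0 ≠ 0
      · refine ⟨fun i hi => ?_, ?_, ?_⟩ <;>
          simp only [iterQR, if_neg h1, if_neg h01, if_pos h0, deqQR] <;>
          first
          | (interval_cases i <;> simp [List.count_cons] <;> omega)
          | (simp; omega)
      · by_cases hq1 : q 1 ≠ 0
        · refine ⟨fun i hi => ?_, ?_, ?_⟩ <;>
            simp only [iterQR, if_neg h1, if_neg h01, if_neg h0, if_pos hq1, deqQR] <;>
            first
            | (interval_cases i <;> simp [List.count_cons] <;> omega)
            | (simp; omega)
        · have hq0 : q 0 = 0 := by simpa using h0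
          have hq1' : q 1 = 0 := by simpa using hq1
          have h23 : q 2 ≠ 0 ∧ q 3 ≠ 0 := by
            by_cases h2 : q 2 = 0 <;> by_cases h3 : q 3 = 0
            · exact absurd ⟨hq0, hq1', h2, h3⟩ h
            · exact absurd (by simp [activeCountQR, hq0, hq1', h2, h3]) h1
            · exact absurd (by simp [activeCountQR, hq0, hq1', h2, h3]) h1
            · exact ⟨h2, h3⟩
          obtain ⟨h2, h3⟩ := h23
          refine ⟨fun i hi => ?_, ?_, ?_⟩ <;>
            simp only [iterQR, if_neg h1, if_neg h01, if_neg h0, if_neg hq1, deqQR] <;>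
            first
            | (interval_cases i <;> simp [List.count_cons] <;> omega)
            | (simp; omega)

end AuxQR
lemma phaseTraceAux_spec : ∀ fuel (q : ℕ → ℕ), q 0 + q 1 + q 2 + q 3 < fuel →
    (∀ i, i < 4 → List.count (some i) (phaseTraceAux fuel q) = q i) ∧
    (phaseTraceAux fuel q).length ≤ 2 * (q 0 + q 1 + q 2 + q 3) + 1 := by
  intro fuel
  induction fuel with
  | zero => intro q hq; omega
  | succ n ih =>
    intro q hq
    by_cases h0 : q 0 = 0 ∧ q 1 = 0 ∧ q 2 = 0 ∧ q 3 = 0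
    · rw [phaseTraceAux, if_pos h0]
      obtain ⟨e0, e1, e2, e3⟩ := h0
      constructor
      · intro i hi; interval_cases i <;> simp [e0, e1, e2, e3]
      · simp
    · rw [phaseTraceAux, if_neg h0]
      obtain ⟨hcnt, hlen, hdec⟩ := iterQR_spec q h0
      set q' := (iterQR q).2 with hq'
      have hih := ih q' (by omega)
      constructor
      · intro i hi
        rw [List.count_append, hih.1 i hi]
        exact hcnt i hi
      · rw [List.length_append]
        omega

lemma phaseTrace_count (q : ℕ → ℕ) (i : ℕ) (hi : i < 4) :
    List.count (some i) (phaseTrace q) = q i :=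
  (phaseTraceAux_spec _ q (by omega)).1 i hi

lemma phaseLen_le (q : ℕ → ℕ) : phaseLen q ≤ 2 * (q 0 + q 1 + q 2 + q 3) + 1 :=
  (phaseTraceAux_spec _ q (by omega)).2

lemma filter_range_getD (l : List (Option ℕ)) (x : Option ℕ) :
    ((List.range l.length).filter fun off => decide (l.getD off none = x)).length
      = List.count x l := by
  induction l with
  | nil => simp
  | cons a t ih =>
    rw [List.length_cons, List.range_succ_eq_map, List.filter_cons]
    have hmap : (List.map Nat.succ (List.range t.length)).filter
        (fun off => decide ((a :: t).getD off none = x))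
        = List.map Nat.succ ((List.range t.length).filter
            (fun off => decide (t.getD off none = x))) := by
      rw [List.filter_map]
      rfl
    by_cases hax : a = x
    · subst hax
      rw [if_pos (by simp), List.length_cons, hmap, List.length_map, ih,
        List.count_cons_self]
    · rw [if_neg (by simp [hax]), hmap, List.length_map, ih,
        List.count_cons_of_ne hax]
lemma phaseStart_inv (a : ℕ → ℕ) : ∀ j, ∃ k, k ≤ j ∧
    phaseStart a j = 4 * k + 4 + ∑ i ∈ Finset.Ico k j, phaseLen (segQ a i) := by
  intro j
  induction j with
  | zero => exact ⟨0, le_refl 0, by simp [phaseStart]⟩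
  | succ j ih =>
    obtain ⟨k, hk, he⟩ := ih
    by_cases hc : 4 * (j + 1) + 4 ≤ phaseStart a j + phaseLen (segQ a j)
    · refine ⟨k, by omega, ?_⟩
      rw [phaseStart, max_eq_left hc, he, Finset.sum_Ico_succ_top hk]
      ring
    · exact ⟨j + 1, le_refl _, by rw [phaseStart, max_eq_right (by omega)]; simp⟩

lemma seg_sum (a : ℕ → ℕ) (k : ℕ) : ∀ j, k ≤ j →
    ∑ i ∈ Finset.Ico k j, (segQ a i 0 + segQ a i 1 + segQ a i 2 + segQ a i 3)
      = ∑ t ∈ Finset.Ico (4 * k) (4 * j), a t := by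
  intro j
  induction j with
  | zero => intro h; interval_cases k; simp
  | succ j ih =>
    intro h
    rcases Nat.lt_or_ge k (j + 1) with hlt | hge
    · have hkj : k ≤ j := by omega
      rw [Finset.sum_Ico_succ_top hkj, ih hkj,
        show 4 * (j + 1) = (4 * j + 3) + 1 by ring,
        Finset.sum_Ico_succ_top (by omega),
        show 4 * j + 3 = (4 * j + 2) + 1 by ring,
        Finset.sum_Ico_succ_top (by omega),
        show 4 * j + 2 = (4 * j + 1) + 1 by ring,
        Finset.sum_Ico_succ_top (by omega),
        show 4 * j + 1 = (4 * j) + 1 by ring,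
        Finset.sum_Ico_succ_top (by omega)]
      simp only [segQ]
      ring_nf
    · have : k = j + 1 := by omega
      subst this; simp

lemma adm8 {b : ℕ} {a : ℕ → ℕ} (hA : Admissible (3/8) b a) (s n : ℕ) :
    8 * (∑ t ∈ Finset.Ico s (s + n), a t) ≤ 3 * n + 8 * b := by
  have h := hA s n
  have h8 : (8 * (∑ t ∈ Finset.Ico s (s + n), a t) : ℝ) ≤ 3 * n + 8 * b := by
    push_cast at h ⊢
    linarith
  exact_mod_cast h8

lemma phaseStart_le {b : ℕ} {a : ℕ → ℕ} (hA : Admissible (3/8) b a) (j : ℕ) :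
    phaseStart a j ≤ 4 * j + 4 + 2 * b := by
  obtain ⟨k, hk, he⟩ := phaseStart_inv a j
  have hsum : ∑ i ∈ Finset.Ico k j, phaseLen (segQ a i)
      ≤ ∑ i ∈ Finset.Ico k j, (2 * (segQ a i 0 + segQ a i 1 + segQ a i 2 + segQ a i 3) + 1) :=
    Finset.sum_le_sum fun i _ => phaseLen_le (segQ a i)
  have hexp : ∑ i ∈ Finset.Ico k j, (2 * (segQ a i 0 + segQ a i 1 + segQ a i 2 + segQ a i 3) + 1)
      = 2 * (∑ i ∈ Finset.Ico k j, (segQ a i 0 + segQ a i 1 + segQ a i 2 + segQ a i 3)) + (j - k) := by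
    rw [Finset.sum_add_distrib, Finset.sum_const, Nat.card_Ico, Finset.mul_sum]
    simp [mul_comm]
  have hadm := adm8 hA (4 * k) (4 * (j - k))
  rw [show 4 * k + 4 * (j - k) = 4 * j by omega] at hadm
  have hseg := seg_sum a k j hk
  omega


/-- there is a bound `T`, depending only on the burstiness `b`, such that in
every execution of Quadruple-Round against a 1-activating injection pattern admissible for
the adversary of type `(3/8, b)`, every station activated in a round `v` has all its
packets heard within `T` rounds of their injection; that is, Quadruple-Round has bounded
packet latency against the 1-activating adversary of injection rate `3/8`. -/
theorem quadruple_round_bounded_latency (b : ℕ) (hb : 0 < b) :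
    ∃ T : ℕ, ∀ a : ℕ → ℕ, Admissible (3/8) b a → ∀ v : ℕ,
      pendingQR a v (v + T + 1) = 0 := by
  refine ⟨2 * b + 7, fun a hA v => ?_⟩
  have hv4 : 4 * (v / 4) ≤ v := by omega
  have hfin : phaseStart a (v / 4) + phaseLen (segQ a (v / 4)) ≤ v + (2 * b + 7) + 1 := by
    have h1 : phaseStart a (v / 4) + phaseLen (segQ a (v / 4)) ≤ phaseStart a (v / 4 + 1) := by
      rw [phaseStart]; exact le_max_left _ _
    have h2 := phaseStart_le hA (v / 4 + 1)
    omega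
  have hheard : heardBefore a v (v + (2 * b + 7) + 1) = a v := by
    rw [heardBefore]
    have hcong : ((List.range (phaseTrace (segQ a (v / 4))).length).filter fun off =>
        decide (phaseStart a (v / 4) + off < v + (2 * b + 7) + 1) &&
        decide ((phaseTrace (segQ a (v / 4))).getD off none = some (v % 4)))
        = ((List.range (phaseTrace (segQ a (v / 4))).length).filter fun off =>
            decide ((phaseTrace (segQ a (v / 4))).getD off none = some (v % 4))) := by
      apply List.filter_congr
      intro off hoff
      rw [List.mem_range] at hoff
      have hlt : phaseStart a (v / 4) + off < v + (2 * b + 7) + 1 := by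
        have : phaseLen (segQ a (v / 4)) = (phaseTrace (segQ a (v / 4))).length := rfl
        omega
      simp [hlt]
    rw [hcong, filter_range_getD, phaseTrace_count _ _ (by omega)]
    show a (4 * (v / 4) + v % 4) = a v
    congr 1
    omega
  rw [pendingQR, hheard]
  omega
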